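/- Let A be a d×d, B a d×e, D an e×e real matrix, and suppose M = [[A, B], [Bᵀ, D]] is positive semi-definite. Then the generalized Schur complement A − B·D†·Bᵀ is positive semi-definite, and moreover M − [[A − B·D†·Bᵀ, 0], [0, 0]] is positive semi-definite, where D† is the Moore–Penrose pseudoinverse of D. -/

import Mathlib

open Matrix

/-- `Ddag` is a Moore–Penrose pseudoinverse of `D`. -/
def IsMoorePenrose {n m : Type*} [Fintype n] [Fintype m]
    (D : Matrix n m ℝ) (Ddag : Matrix m n ℝ) : Prop :=
  D * Ddag * D = D ∧ Ddag * D * Ddag = Ddag ∧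
    (D * Ddag)ᵀ = D * Ddag ∧ (Ddag * D)ᵀ = Ddag * D

private lemma real_conjTranspose_eq_transpose {m n : Type*} (A : Matrix m n ℝ) :
    Aᴴ = Aᵀ := by
  ext i j
  simp [conjTranspose_apply]

/-- Uniqueness of the Moore–Penrose pseudoinverse. -/
private lemma mp_unique {n : Type*} [Fintype n] {D X Y : Matrix n n ℝ}
    (hX : IsMoorePenrose D X) (hY : IsMoorePenrose D Y) : X = Y := by
  obtain ⟨x1, x2, x3, x4⟩ := hX
  obtain ⟨y1, y2, y3, y4⟩ := hY
  have hDX : D * X = D * Y := by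
    calc D * X = (D * X)ᵀ := x3.symm
      _ = Xᵀ * Dᵀ := by rw [transpose_mul]
      _ = Xᵀ * (D * Y * D)ᵀ := by rw [y1]
      _ = Xᵀ * (Dᵀ * (D * Y)ᵀ) := by rw [transpose_mul]
      _ = Xᵀ * (Dᵀ * (D * Y)) := by rw [y3]
      _ = (Xᵀ * Dᵀ) * (D * Y) := by rw [mul_assoc]
      _ = (D * X)ᵀ * (D * Y) := by rw [transpose_mul]
      _ = (D * X) * (D * Y) := by rw [x3]
      _ = (D * X * D) * Y := by rw [mul_assoc, mul_assoc, mul_assoc]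
      _ = D * Y := by rw [x1]
  have hXD : X * D = Y * D := by
    calc X * D = (X * D)ᵀ := x4.symm
      _ = Dᵀ * Xᵀ := by rw [transpose_mul]
      _ = (D * (Y * D))ᵀ * Xᵀ := by rw [← mul_assoc, y1]
      _ = ((Y * D)ᵀ * Dᵀ) * Xᵀ := by rw [transpose_mul]
      _ = ((Y * D) * Dᵀ) * Xᵀ := by rw [y4]
      _ = (Y * D) * (Dᵀ * Xᵀ) := by rw [mul_assoc]
      _ = (Y * D) * (X * D)ᵀ := by rw [transpose_mul]
      _ = (Y * D) * (X * D) := by rw [x4]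
      _ = Y * (D * X * D) := by rw [mul_assoc, mul_assoc]
      _ = Y * D := by rw [x1]
  calc X = X * D * X := x2.symm
    _ = Y * D * X := by rw [hXD]
    _ = Y * (D * X) := by rw [mul_assoc]
    _ = Y * (D * Y) := by rw [hDX]
    _ = Y * D * Y := by rw [mul_assoc]
    _ = Y := y2

private lemma mp_transpose {n : Type*} [Fintype n] {D X : Matrix n n ℝ}
    (h : IsMoorePenrose D X) : IsMoorePenrose Dᵀ Xᵀ := by
  obtain ⟨h1, h2, h3, h4⟩ := h
  refine ⟨?_, ?_, ?_, ?_⟩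
  · rw [← transpose_mul, ← transpose_mul, ← mul_assoc, h1]
  · rw [← transpose_mul, ← transpose_mul, ← mul_assoc, h2]
  · rw [← transpose_mul, transpose_transpose]
    exact h4.symm
  · rw [← transpose_mul, transpose_transpose]
    exact h3.symm

/-- If `M = [[A, B], [Bᵀ, D]]` is positive semi-definite, then its generalized Schur
complement `A − B D† Bᵀ` is positive semi-definite, and moreover
`M − [[A − B D† Bᵀ, 0], [0, 0]]` is positive semi-definite. -/
theorem schur_complement_posSemidef
    {d e : Type*} [Fintype d] [Fintype e] [DecidableEq d] [DecidableEq e]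
    (A : Matrix d d ℝ) (B : Matrix d e ℝ) (D : Matrix e e ℝ)
    (Ddag : Matrix e e ℝ) (hD : IsMoorePenrose D Ddag)
    (hM : (Matrix.fromBlocks A B Bᵀ D).PosSemidef) :
    (A - B * Ddag * Bᵀ).PosSemidef ∧
      (Matrix.fromBlocks A B Bᵀ D -
        Matrix.fromBlocks (A - B * Ddag * Bᵀ) 0 0 0).PosSemidef := by
  obtain ⟨h1, h2, h3, h4⟩ := hD
  -- factor M = Xᵀ X
  obtain ⟨X, hX⟩ : ∃ X : Matrix (d ⊕ e) (d ⊕ e) ℝ, fromBlocks A B Bᵀ D = Xᴴ * X := by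
    open scoped MatrixOrder Matrix.Norms.L2Operator in
    exact CStarAlgebra.nonneg_iff_eq_star_mul_self.mp hM.nonneg
  rw [real_conjTranspose_eq_transpose] at hX
  set X₁ : Matrix (d ⊕ e) d ℝ := X.submatrix id Sum.inl with hX₁def
  set X₂ : Matrix (d ⊕ e) e ℝ := X.submatrix id Sum.inr with hX₂def
  have hXc : X = fromCols X₁ X₂ := by
    ext i (j | j) <;> rfl
  rw [hXc, transpose_fromCols, fromRows_mul_fromCols] at hX
  have hB : B = X₁ᵀ * X₂ := by
    have := congrArg Matrix.toBlocks₁₂ hX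
    simpa [Matrix.toBlocks_fromBlocks₁₂] using this
  have hDf : D = X₂ᵀ * X₂ := by
    have := congrArg Matrix.toBlocks₂₂ hX
    simpa [Matrix.toBlocks_fromBlocks₂₂] using this
  have hDsym : Dᵀ = D := by rw [hDf, transpose_mul, transpose_transpose]
  -- Ddag is symmetric (uniqueness of MP inverse of the symmetric D)
  have hDdagsym : Ddagᵀ = Ddag := by
    have hT : IsMoorePenrose D Ddagᵀ := by
      have := mp_transpose ⟨h1, h2, h3, h4⟩
      rwa [hDsym] at this
    exact (mp_unique ⟨h1, h2, h3, h4⟩ hT).symm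
  -- column space fact : X₂ (1 - D† D) = 0, hence B D† D = B
  have hD0 : D * (1 - Ddag * D) = 0 := by
    rw [Matrix.mul_sub, Matrix.mul_one, ← Matrix.mul_assoc, h1, sub_self]
  have hR : X₂ * (1 - Ddag * D) = 0 := by
    rw [← conjTranspose_mul_self_eq_zero, real_conjTranspose_eq_transpose,
      transpose_mul, Matrix.mul_assoc, ← Matrix.mul_assoc X₂ᵀ, ← hDf, hD0,
      Matrix.mul_zero]
  have hX₂D : X₂ * (Ddag * D) = X₂ := by
    rw [Matrix.mul_sub, Matrix.mul_one] at hR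
    exact (sub_eq_zero.mp hR).symm
  have hBDd : B * Ddag * D = B := by
    rw [hB, Matrix.mul_assoc, Matrix.mul_assoc, hX₂D]
  have hDDdB : D * Ddag * Bᵀ = Bᵀ := by
    have h := congrArg Matrix.transpose hBDd
    rw [transpose_mul, transpose_mul, hDsym, hDdagsym, ← Matrix.mul_assoc] at h
    exact h
  -- Part 1 : the Schur complement is `V M Vᴴ`
  have hMposS : (A - B * Ddag * Bᵀ).PosSemidef := by
    set V : Matrix d (d ⊕ e) ℝ := fromCols 1 (-(B * Ddag)) with hV
    have key : V * (fromBlocks A B Bᵀ D) * Vᴴ = A - B * Ddag * Bᵀ := by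
      rw [real_conjTranspose_eq_transpose, hV, fromCols_mul_fromBlocks,
        transpose_fromCols, fromCols_mul_fromRows]
      have e1 : (1 : Matrix d d ℝ) * A + -(B * Ddag) * Bᵀ = A - B * Ddag * Bᵀ := by
        rw [Matrix.one_mul, Matrix.neg_mul, ← sub_eq_add_neg]
      have e2 : (1 : Matrix d d ℝ) * B + -(B * Ddag) * D = 0 := by
        rw [Matrix.one_mul, Matrix.neg_mul, hBDd, add_neg_cancel]
      rw [e1, e2, transpose_one, Matrix.mul_one, Matrix.zero_mul, add_zero]
    rw [← key]
    exact hM.mul_mul_conjTranspose_same V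
  refine ⟨hMposS, ?_⟩
  -- Part 2
  have hDpos : D.PosSemidef := by
    rw [hDf, ← real_conjTranspose_eq_transpose]
    exact posSemidef_conjTranspose_mul_self X₂
  have hN : Matrix.fromBlocks A B Bᵀ D -
      Matrix.fromBlocks (A - B * Ddag * Bᵀ) 0 0 0 =
      Matrix.fromBlocks (B * Ddag * Bᵀ) B Bᵀ D := by
    ext (i | i) (j | j) <;> simp [fromBlocks, sub_sub_cancel]
  rw [hN]
  set P : Matrix (d ⊕ e) e ℝ := fromRows (B * Ddag) 1 with hP
  have key : P * D * Pᴴ = Matrix.fromBlocks (B * Ddag * Bᵀ) B Bᵀ D := by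
    rw [real_conjTranspose_eq_transpose, hP, fromRows_mul, transpose_fromRows,
      fromRows_mul_fromCols, transpose_mul, hDdagsym, transpose_one,
      Matrix.mul_one, Matrix.mul_one, Matrix.one_mul, hBDd,
      ← Matrix.mul_assoc, ← Matrix.mul_assoc, hDDdB]
  rw [← key]
  exact hDpos.mul_mul_conjTranspose_same P
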